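/- arXiv:1607.02081 — 5 statements merged into one kernel-verified Lean document; each statement's English description precedes it below -/
import Mathlib

section
/- Let N ≥ 3 be an integer, let (p,q) be a pair of primes compatible with N, and let n be an integer with 3 ≤ n ≤ N. If t > 0 and t ∉ {t_3, t_4, …, t_n}, then there exists a unique point z ∈ S_n such that f_z(t) = min{f_x(t) : x ∈ S_n}. -/
open Real

/-- The golden ratio `(1 + √5)/2`. -/
noncomputable def phiR : ℝ := (1 + Real.sqrt 5) / 2

/-- `mmax p q n = max(h_n·log p, h_{n-1}·log q)`, the logarithmic Mahler measure
of `p^{h_n}/q^{h_{n-1}}` for distinct primes `p`, `q`, where `h` is Fibonacci. -/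
noncomputable def mmax (p q n : ℕ) : ℝ :=
  max ((Nat.fib n : ℝ) * Real.log p) ((Nat.fib (n - 1) : ℝ) * Real.log q)

/-- `gmax n = max(h_n, φ·h_{n-1})`. -/
noncomputable def gmax (n : ℕ) : ℝ :=
  max (Nat.fib n : ℝ) (phiR * (Nat.fib (n - 1) : ℝ))

/-- The equation defining `t_n(p,q)`:
`m(p^{h_n}/q^{h_{n-1}})^t = m(p^{h_{n-1}}/q^{h_{n-2}})^t + m(p^{h_{n-2}}/q^{h_{n-3}})^t`. -/
def peq (p q n : ℕ) (t : ℝ) : Prop :=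
  mmax p q n ^ t = mmax p q (n - 1) ^ t + mmax p q (n - 2) ^ t

/-- The equation defining `s_n`:
`max(h_n, φ h_{n-1})^t = max(h_{n-1}, φ h_{n-2})^t + max(h_{n-2}, φ h_{n-3})^t`. -/
def geq (n : ℕ) (t : ℝ) : Prop :=
  gmax n ^ t = gmax (n - 1) ^ t + gmax (n - 2) ^ t

/-- Condition (W) on a pair of primes `(p,q)` relative to `N`. -/
def CondW (N p q : ℕ) : Prop :=
  ((Nat.fib N : ℝ) / Nat.fib (N - 1) < Real.log q / Real.log p ∧
    Real.log q / Real.log p < (Nat.fib (N - 1) : ℝ) / Nat.fib (N - 2)) ∨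
  ((Nat.fib (N - 1) : ℝ) / Nat.fib (N - 2) < Real.log q / Real.log p ∧
    Real.log q / Real.log p < (Nat.fib N : ℝ) / Nat.fib (N - 1))

/-- `V_n`: vectors `x ∈ ℕ^N` (1-based entry `i` is `x ⟨i-1⟩`) with
`Σ x_i h_i = h_n` and `Σ x_i h_{i-1} = h_{n-1}`. -/
def Vset (N n : ℕ) : Set (Fin N → ℕ) :=
  {x | ∑ i, x i * Nat.fib ((i : ℕ) + 1) = Nat.fib n ∧
       ∑ i, x i * Nat.fib (i : ℕ) = Nat.fib (n - 1)}

/-- The measure function `f_x(t) = (Σ_{i=1}^N x_i·max(h_i log p, h_{i-1} log q)^t)^{1/t}`. -/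
noncomputable def fmeas (N p q : ℕ) (x : Fin N → ℕ) (t : ℝ) : ℝ :=
  (∑ i, (x i : ℝ) * mmax p q ((i : ℕ) + 1) ^ t) ^ (1 / t)

/-- `x_n(i)`: the vector whose (i−2)nd (1-based) entry is `h_{n+1−i}`, whose
(i−1)st entry is `h_{n+2−i}`, and whose other entries are 0.  (For `i = 2`, `n = 1`
this gives `x_1(2) = (1,0,…,0)`.) -/
def xvec (N n i : ℕ) : Fin N → ℕ := fun j =>
  if (j : ℕ) + 3 = i then Nat.fib (n + 1 - i)
  else if (j : ℕ) + 2 = i then Nat.fib (n + 2 - i)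
  else 0

/-- `S_n = {x_n(i) : 3 ≤ i ≤ n+1}` for `n ≥ 2`, and `S_1 = {x_1(2)}`. -/
def Sset (N n : ℕ) : Set (Fin N → ℕ) :=
  if n = 1 then {xvec N 1 2}
  else {x | ∃ i, 3 ≤ i ∧ i ≤ n + 1 ∧ x = xvec N n i}

/-- `z` is almost consecutive-free: `z_j·z_{j+1} ≠ 0` implies `z_i = 0` for all `i > j+1`. -/
def ACF (N : ℕ) (z : Fin N → ℕ) : Prop :=
  ∀ (j : Fin N) (hj : (j : ℕ) + 1 < N),
    z j * z ⟨(j : ℕ) + 1, hj⟩ ≠ 0 → ∀ i : Fin N, (j : ℕ) + 1 < (i : ℕ) → z i = 0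

/-- `C_n`: the almost consecutive-free elements of `V_n`. -/
def Cset (N n : ℕ) : Set (Fin N → ℕ) := {z ∈ Vset N n | ACF N z}

/-- A factorization of `z ∈ V_n`: a `K`-tuple `x` with `x k ∈ V_{idx k}`,
`1 ≤ idx k ≤ n`, and `z = Σ_k x k`. -/
def IsFactorization (N n : ℕ) (z : Fin N → ℕ) {K : ℕ}
    (idx : Fin K → ℕ) (x : Fin K → Fin N → ℕ) : Prop :=
  (∀ k, 1 ≤ idx k ∧ idx k ≤ n ∧ x k ∈ Vset N (idx k)) ∧ z = ∑ k, x k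

/-- A tuple is `S`-type if each component lies in `∪_{i=1}^n S_i`. -/
def STypeFac (N n : ℕ) {K : ℕ} (x : Fin K → Fin N → ℕ) : Prop :=
  ∀ k, ∃ i, 1 ≤ i ∧ i ≤ n ∧ x k ∈ Sset N i

/-- `z` is `S`-restricted: every non-trivial (i.e. `K ≠ 1`) factorization is `S`-type. -/
def SRestricted (N n : ℕ) (z : Fin N → ℕ) : Prop :=
  ∀ (K : ℕ) (idx : Fin K → ℕ) (x : Fin K → Fin N → ℕ),
    IsFactorization N n z idx x → K ≠ 1 → STypeFac N n x

/-- `R_n`: the `S`-restricted elements of `C_n`. -/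
def Rset (N n : ℕ) : Set (Fin N → ℕ) := {z ∈ Cset N n | SRestricted N n z}

/-- The infimum attaining set `U_x = {t > 0 : f_x(t) = min{f_y(t) : y ∈ V_j}}`. -/
def Uset (N p q j : ℕ) (x : Fin N → ℕ) : Set ℝ :=
  {t | 0 < t ∧ IsLeast ((fun y => fmeas N p q y t) '' Vset N j) (fmeas N p q x t)}

/-- The shift map `λ((x_1,…,x_N)) = (0,x_1,…,x_{N-1})`. -/
def shiftMap (N : ℕ) (x : Fin N → ℕ) : Fin N → ℕ := fun j =>
  if (j : ℕ) = 0 then 0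
  else x ⟨(j : ℕ) - 1, lt_of_le_of_lt (Nat.sub_le _ _) j.isLt⟩


lemma Dsign (A B C ts : ℝ) (hA : 0 < A) (hAB : A ≤ B) (hBC : B ≤ C)
    (hts : 0 < ts) (heq : C ^ ts = B ^ ts + A ^ ts) (s : ℝ) :
    (s < ts → C ^ s < B ^ s + A ^ s) ∧ (ts < s → B ^ s + A ^ s < C ^ s) := by
  have hB : 0 < B := lt_of_lt_of_le hA hAB
  have hC : 0 < C := lt_of_lt_of_le hB hBC
  have hBC' : B < C := by
    by_contra h
    push_neg at h
    have h1 : C ^ ts ≤ B ^ ts := Real.rpow_le_rpow hC.le h hts.le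
    have h2 : 0 < A ^ ts := Real.rpow_pos_of_pos hA ts
    linarith
  set u := A / C with hu
  set v := B / C with hv
  have hu0 : 0 < u := div_pos hA hC
  have hv0 : 0 < v := div_pos hB hC
  have hv1 : v < 1 := (div_lt_one hC).mpr hBC'
  have hu1 : u < 1 := (div_lt_one hC).mpr (lt_of_le_of_lt hAB hBC')
  have hid : ∀ s : ℝ, A ^ s + B ^ s = C ^ s * (u ^ s + v ^ s) := by
    intro s
    have hCne : C ^ s ≠ 0 := (Real.rpow_pos_of_pos hC s).ne'
    rw [hu, hv, Real.div_rpow hA.le hC.le, Real.div_rpow hB.le hC.le]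
    field_simp
  have hone : u ^ ts + v ^ ts = 1 := by
    have h := hid ts
    rw [heq] at h
    have hCne : C ^ ts ≠ 0 := (Real.rpow_pos_of_pos hC ts).ne'
    have hP : (0:ℝ) < B ^ ts + A ^ ts := by
      have := Real.rpow_pos_of_pos hA ts; have := Real.rpow_pos_of_pos hB ts; linarith
    have h' : (B ^ ts + A ^ ts) * (u ^ ts + v ^ ts) = (B ^ ts + A ^ ts) * 1 := by
      rw [mul_one]; linarith
    exact mul_left_cancel₀ hP.ne' h'
  constructor
  · intro hs
    have h1 : u ^ ts < u ^ s := Real.rpow_lt_rpow_of_exponent_gt hu0 hu1 hs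
    have h2 : v ^ ts < v ^ s := Real.rpow_lt_rpow_of_exponent_gt hv0 hv1 hs
    have h3 : (1:ℝ) < u ^ s + v ^ s := by linarith
    have h4 := mul_lt_mul_of_pos_left h3 (Real.rpow_pos_of_pos hC s)
    rw [← hid s] at h4
    linarith
  · intro hs
    have h1 : u ^ s < u ^ ts := Real.rpow_lt_rpow_of_exponent_gt hu0 hu1 hs
    have h2 : v ^ s < v ^ ts := Real.rpow_lt_rpow_of_exponent_gt hv0 hv1 hs
    have h3 : u ^ s + v ^ s < 1 := by linarith
    have h4 := mul_lt_mul_of_pos_left h3 (Real.rpow_pos_of_pos hC s)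
    rw [← hid s] at h4
    linarith

lemma sum_xvec (N p q n : ℕ) (t : ℝ) (i : ℕ) (h3 : 3 ≤ i) (hiN : i ≤ N + 1) :
    ∑ j : Fin N, (xvec N n i j : ℝ) * mmax p q ((j : ℕ) + 1) ^ t
      = (Nat.fib (n + 1 - i) : ℝ) * mmax p q (i - 2) ^ t
        + (Nat.fib (n + 2 - i) : ℝ) * mmax p q (i - 1) ^ t := by
  have hN2 : 2 ≤ N := by omega
  set a : Fin N := ⟨i - 3, by omega⟩ with ha
  set b : Fin N := ⟨i - 2, by omega⟩ with hb
  have hab : a ≠ b := by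
    simp only [ha, hb, Fin.mk.injEq, ne_eq]
    omega
  have e1 : (a : ℕ) = i - 3 := rfl
  have e2 : (b : ℕ) = i - 2 := rfl
  have hsum : ∑ j : Fin N, (xvec N n i j : ℝ) * mmax p q ((j : ℕ) + 1) ^ t
      = ∑ j ∈ ({a, b} : Finset (Fin N)), (xvec N n i j : ℝ) * mmax p q ((j : ℕ) + 1) ^ t := by
    refine (Finset.sum_subset (Finset.subset_univ _) ?_).symm
    intro j _ hj
    simp only [Finset.mem_insert, Finset.mem_singleton] at hj
    push_neg at hj
    have h1 : ¬ ((j : ℕ) + 3 = i) := by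
      intro h
      exact hj.1 (Fin.ext (by rw [e1]; omega))
    have h2 : ¬ ((j : ℕ) + 2 = i) := by
      intro h
      exact hj.2 (Fin.ext (by rw [e2]; omega))
    simp [xvec, h1, h2]
  rw [hsum, Finset.sum_pair hab]
  have hxa : xvec N n i a = Nat.fib (n + 1 - i) := by
    simp only [xvec, e1]
    rw [if_pos (by omega)]
  have hxb : xvec N n i b = Nat.fib (n + 2 - i) := by
    simp only [xvec, e2]
    rw [if_neg (by omega), if_pos (by omega)]
  rw [hxa, hxb, e1, e2, (by omega : i - 3 + 1 = i - 2), (by omega : i - 2 + 1 = i - 1)]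

/-- final assertion of Theorem `MinimumOver`: for `N ≥ 3`, a pair of primes
`(p,q)` compatible with `N`, and `3 ≤ n ≤ N`, if `t > 0` and `t ∉ {t_3,…,t_n}` then there is a
unique `z ∈ S_n` with `f_z(t) = min{f_x(t) : x ∈ S_n}`. -/
theorem stmt7 (N p q : ℕ) (hN : 3 ≤ N) (hp : p.Prime) (hq : q.Prime) (hW : CondW N p q)
    (tt : ℕ → ℝ)
    (htt : ∀ m : ℕ, 3 ≤ m → m ≤ N + 1 →
      (0 < tt m ∧ peq p q m (tt m)) ∧ ∀ t' : ℝ, 0 < t' → peq p q m t' → t' = tt m)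
    (hdec : ∀ m : ℕ, 3 ≤ m → m ≤ N → tt (m + 1) < tt m)
    (n : ℕ) (h3n : 3 ≤ n) (hnN : n ≤ N) (t : ℝ) (ht : 0 < t)
    (hnot : ∀ i : ℕ, 3 ≤ i → i ≤ n → t ≠ tt i) :
    ∃! z : Fin N → ℕ, z ∈ Sset N n ∧
      ∀ x ∈ Sset N n, fmeas N p q z t ≤ fmeas N p q x t := by
  classical
  have hp1 : (1:ℝ) < p := by exact_mod_cast hp.one_lt
  have hq1 : (1:ℝ) < q := by exact_mod_cast hq.one_lt
  have hlp : 0 < Real.log p := Real.log_pos hp1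
  have hlq : 0 < Real.log q := Real.log_pos hq1
  have Mpos : ∀ k, 1 ≤ k → 0 < mmax p q k := by
    intro k hk
    have hf : 0 < (Nat.fib k : ℝ) := by exact_mod_cast Nat.fib_pos.mpr (by omega)
    exact lt_of_lt_of_le (mul_pos hf hlp) (le_max_left _ _)
  have Mmono : ∀ k, mmax p q k ≤ mmax p q (k+1) := by
    intro k
    apply max_le_max
    · exact mul_le_mul_of_nonneg_right (by exact_mod_cast Nat.fib_le_fib_succ) hlp.le
    · exact mul_le_mul_of_nonneg_right
        (by exact_mod_cast Nat.fib_mono (by omega : k - 1 ≤ (k+1) - 1)) hlq.le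
  set G : ℕ → ℝ := fun i => (Nat.fib (n + 1 - i) : ℝ) * mmax p q (i - 2) ^ t
      + (Nat.fib (n + 2 - i) : ℝ) * mmax p q (i - 1) ^ t with hGdef
  have hfm : ∀ i, 3 ≤ i → i ≤ n + 1 → fmeas N p q (xvec N n i) t = G i ^ (1/t) := by
    intro i h1 h2
    simp only [fmeas]
    rw [sum_xvec N p q n t i h1 (by omega)]
  have hGpos : ∀ i, 3 ≤ i → i ≤ n + 1 → 0 < G i := by
    intro i h1 h2
    have hf : (1:ℝ) ≤ (Nat.fib (n + 2 - i) : ℝ) := by exact_mod_cast Nat.fib_pos.mpr (by omega)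
    have hm := Real.rpow_pos_of_pos (Mpos (i-1) (by omega)) t
    have hf0 : (0:ℝ) ≤ (Nat.fib (n + 1 - i) : ℝ) := by positivity
    have hm0 := Real.rpow_pos_of_pos (Mpos (i-2) (by omega)) t
    simp only [hGdef]
    nlinarith
  have step : ∀ i, 3 ≤ i → i ≤ n →
      (t < tt i → G (i+1) < G i) ∧ (tt i < t → G i < G (i+1)) := by
    intro i h3 hn'
    obtain ⟨⟨hpos, hpeq⟩, -⟩ := htt i (by omega) (by omega)
    have hpeq' : mmax p q i ^ (tt i) = mmax p q (i-1) ^ (tt i) + mmax p q (i-2) ^ (tt i) := hpeq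
    have hAB : mmax p q (i-2) ≤ mmax p q (i-1) := by
      have h := Mmono (i-2); rwa [(by omega : i - 2 + 1 = i - 1)] at h
    have hBC : mmax p q (i-1) ≤ mmax p q i := by
      have h := Mmono (i-1); rwa [(by omega : i - 1 + 1 = i)] at h
    have key := Dsign (mmax p q (i-2)) (mmax p q (i-1)) (mmax p q i) (tt i)
      (Mpos (i-2) (by omega)) hAB hBC hpos hpeq' t
    have hF : (0:ℝ) < (Nat.fib (n + 1 - i) : ℝ) := by exact_mod_cast Nat.fib_pos.mpr (by omega)
    have hdiff : G i - G (i+1) = (Nat.fib (n + 1 - i) : ℝ)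
        * (mmax p q (i-2) ^ t + mmax p q (i-1) ^ t - mmax p q i ^ t) := by
      have e2 : (Nat.fib (n + 2 - i) : ℝ) = (Nat.fib (n + 1 - i) : ℝ) + (Nat.fib (n - i) : ℝ) := by
        have h : n + 2 - i = (n - i) + 2 := by omega
        rw [h, Nat.fib_add_two, (by omega : n + 1 - i = (n - i) + 1)]
        push_cast; ring
      simp only [hGdef]
      rw [(by omega : n + 1 - (i+1) = n - i), (by omega : n + 2 - (i+1) = n + 1 - i),
        (by omega : i + 1 - 2 = i - 1), (by omega : i + 1 - 1 = i), e2]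
      ring
    constructor
    · intro hlt
      have h := key.1 hlt
      nlinarith
    · intro hlt
      have h := key.2 hlt
      nlinarith
  have tt_anti : ∀ b a, 3 ≤ a → a ≤ b → b ≤ N + 1 → tt b ≤ tt a := by
    intro b
    induction b with
    | zero => intro a h1 h2 h3; omega
    | succ m ih =>
      intro a h1 h2 h3
      rcases Nat.eq_or_lt_of_le h2 with h | h
      · rw [← h]
      · exact le_trans (hdec m (by omega) (by omega)).le (ih a h1 (by omega) (by omega))
  have hkey : ∃ m, 3 ≤ m ∧ m ≤ n + 1 ∧ (∀ j, 3 ≤ j → j ≤ n → j < m → t < tt j)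
      ∧ (∀ j, m ≤ j → j ≤ n → tt j < t) := by
    by_cases hex : ∃ i, 3 ≤ i ∧ i ≤ n ∧ tt i < t
    · set S : Set ℕ := {i | 3 ≤ i ∧ i ≤ n ∧ tt i < t} with hS
      have hne : S.Nonempty := hex
      have hmem : 3 ≤ sInf S ∧ sInf S ≤ n ∧ tt (sInf S) < t := Nat.sInf_mem hne
      refine ⟨sInf S, hmem.1, by omega, ?_, ?_⟩
      · intro j hj3 hjn hjm
        have hnotin : j ∉ S := Nat.notMem_of_lt_sInf hjm
        have hle : t ≤ tt j := by
          by_contra hc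
          push_neg at hc
          exact hnotin ⟨hj3, hjn, hc⟩
        exact lt_of_le_of_ne hle (hnot j hj3 hjn)
      · intro j hj hjn
        exact lt_of_le_of_lt (tt_anti j (sInf S) hmem.1 hj (by omega)) hmem.2.2
    · push_neg at hex
      refine ⟨n + 1, by omega, le_refl _, ?_, ?_⟩
      · intro j hj3 hjn hjm
        exact lt_of_le_of_ne (hex j hj3 hjn) (hnot j hj3 hjn)
      · intro j hj hjn
        omega
  obtain ⟨m, hm3, hmn, P2, P3⟩ := hkey
  have chain_dec : ∀ j k, 3 ≤ j → j ≤ k → k ≤ m → G k ≤ G j ∧ (j < k → G k < G j) := by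
    intro j k hj3 hjk
    induction k, hjk using Nat.le_induction with
    | base => intro _; exact ⟨le_rfl, fun h => absurd h (lt_irrefl j)⟩
    | succ k hk ih =>
      intro hkm
      have h1 := ih (by omega)
      have hstep := (step k (by omega) (by omega)).1 (P2 k (by omega) (by omega) (by omega))
      exact ⟨le_trans hstep.le h1.1, fun _ => lt_of_lt_of_le hstep h1.1⟩
  have chain_inc : ∀ j k, m ≤ j → j ≤ k → k ≤ n + 1 → G j ≤ G k ∧ (j < k → G j < G k) := by
    intro j k hmj hjk
    induction k, hjk using Nat.le_induction with
    | base => intro _; exact ⟨le_rfl, fun h => absurd h (lt_irrefl j)⟩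
    | succ k hk ih =>
      intro hkn
      have h1 := ih (by omega)
      have hstep := (step k (by omega) (by omega)).2 (P3 k (by omega) (by omega))
      exact ⟨le_trans h1.1 hstep.le, fun _ => lt_of_le_of_lt h1.1 hstep⟩
  have hGmin : ∀ j, 3 ≤ j → j ≤ n + 1 → G m ≤ G j ∧ (j ≠ m → G m < G j) := by
    intro j hj3 hjn
    rcases le_or_gt j m with h | h
    · have hc := chain_dec j m hj3 h (le_refl m)
      exact ⟨hc.1, fun hne => hc.2 (by omega)⟩
    · have hc := chain_inc m j (le_refl m) h.le hjn
      exact ⟨hc.1, fun _ => hc.2 h⟩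
  have hSset : Sset N n = {x | ∃ i, 3 ≤ i ∧ i ≤ n + 1 ∧ x = xvec N n i} := by
    rw [Sset, if_neg (by omega : ¬ n = 1)]
  refine ⟨xvec N n m, ⟨?_, ?_⟩, ?_⟩
  · rw [hSset]; exact ⟨m, hm3, hmn, rfl⟩
  · intro x hx
    rw [hSset] at hx
    obtain ⟨j, hj3, hjn, rfl⟩ := hx
    rw [hfm m hm3 hmn, hfm j hj3 hjn]
    exact Real.rpow_le_rpow (hGpos m hm3 hmn).le (hGmin j hj3 hjn).1 (by positivity)
  · rintro z' ⟨hz'mem, hz'min⟩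
    rw [hSset] at hz'mem
    obtain ⟨j, hj3, hjn, rfl⟩ := hz'mem
    by_cases hje : j = m
    · rw [hje]
    · exfalso
      have h1 : G m < G j := (hGmin j hj3 hjn).2 hje
      have h2 : fmeas N p q (xvec N n m) t < fmeas N p q (xvec N n j) t := by
        rw [hfm m hm3 hmn, hfm j hj3 hjn]
        exact Real.rpow_lt_rpow (hGpos m hm3 hmn).le h1 (by positivity)
      have h3 := hz'min (xvec N n m) (by rw [hSset]; exact ⟨m, hm3, hmn, rfl⟩)
      linarith
end

section
/- Let N ≥ 3 be an integer, let p, q be primes satisfying condition (W), and let n be an integer with 1 ≤ n ≤ N. If x, y ∈ V_n are such that f_x(t) = f_y(t) for infinitely many values of t ∈ (0,∞), then x = y. -/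
open Real

section Stmt8Helpers
open Real Filter Topology


lemma expsum_zero_of_unbdd {m : ℕ} (L : Fin m → ℝ) (hL : Function.Injective L)
    (c : Fin m → ℝ) (S : Set ℝ) (hub : ¬ BddAbove S)
    (hz : ∀ t ∈ S, ∑ i, c i * Real.exp (L i * t) = 0) : ∀ i, c i = 0 := by
  by_contra hc
  push_neg at hc
  obtain ⟨i0, hi0⟩ := hc
  set T : Finset (Fin m) := Finset.univ.filter (fun i => c i ≠ 0) with hT
  have hi0T : i0 ∈ T := by simp [hT, hi0]
  obtain ⟨j, hjT, hmax⟩ := T.exists_max_image L ⟨i0, hi0T⟩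
  have hcj : c j ≠ 0 := by simpa [hT] using hjT
  -- the auxiliary function
  set h : ℝ → ℝ := fun t => ∑ i, c i * Real.exp ((L i - L j) * t) with hh
  have hhS : ∀ t ∈ S, h t = 0 := by
    intro t ht
    have : h t = (∑ i, c i * Real.exp (L i * t)) / Real.exp (L j * t) := by
      rw [Finset.sum_div]
      refine Finset.sum_congr rfl fun i _ => ?_
      rw [mul_div_assoc, ← Real.exp_sub, sub_mul]
    rw [this, hz t ht, zero_div]
  -- h tends to c j at infinity
  have htend : Tendsto h atTop (𝓝 (c j)) := by
    have : Tendsto h atTop (𝓝 (∑ i, if i = j then c j else 0)) := by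
      apply tendsto_finset_sum
      intro i _
      by_cases hij : i = j
      · subst hij
        simp only [sub_self, zero_mul, Real.exp_zero, mul_one, if_pos rfl]
        exact tendsto_const_nhds
      · rw [if_neg hij]
        by_cases hci : c i = 0
        · simpa [hci] using tendsto_const_nhds
        · have hiT : i ∈ T := by simp [hT, hci]
          have hlt : L i - L j < 0 := by
            have hle : L i ≤ L j := hmax i hiT
            have hne : L i ≠ L j := fun e => hij (hL e)
            exact sub_neg.mpr (lt_of_le_of_ne hle hne)
          have h1 : Tendsto (fun t : ℝ => (L i - L j) * t) atTop atBot :=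
            (tendsto_const_mul_atBot_of_neg hlt).mpr tendsto_id
          have h2 : Tendsto (fun t : ℝ => Real.exp ((L i - L j) * t)) atTop (𝓝 0) :=
            Real.tendsto_exp_atBot.comp h1
          simpa using h2.const_mul (c i)
    simpa using this
  -- pick points of S going to infinity
  rw [not_bddAbove_iff] at hub
  have hex : ∀ n : ℕ, ∃ u : ℝ, u ∈ S ∧ (n : ℝ) < u := fun n => hub n
  choose u huS hun using hex
  have hutop : Tendsto u atTop atTop :=
    tendsto_atTop_mono (fun n => (hun n).le) tendsto_natCast_atTop_atTop
  have h1 : Tendsto (h ∘ u) atTop (𝓝 (c j)) := htend.comp hutop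
  have h2 : Tendsto (h ∘ u) atTop (𝓝 0) := by
    have : (h ∘ u) = fun _ => 0 := funext fun n => hhS (u n) (huS n)
    rw [this]; exact tendsto_const_nhds
  exact hcj (tendsto_nhds_unique h1 h2)

lemma expsum_zero_of_infinite {m : ℕ} (L : Fin m → ℝ) (hL : Function.Injective L)
    (c : Fin m → ℝ) (S : Set ℝ) (hS : S.Infinite) (hpos : S ⊆ Set.Ioi 0)
    (hz : ∀ t ∈ S, ∑ i, c i * Real.exp (L i * t) = 0) : ∀ i, c i = 0 := by
  by_cases hub : BddAbove S
  · obtain ⟨M, hM⟩ := hub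
    set g : ℝ → ℝ := fun t => ∑ i, c i * Real.exp (L i * t) with hg
    have hga : AnalyticOnNhd ℝ g Set.univ := by
      apply Finset.analyticOnNhd_fun_sum
      intro i _
      exact analyticOnNhd_const.mul ((analyticOnNhd_const.mul analyticOnNhd_id).rexp)
    obtain ⟨z, hzK, hacc⟩ := hS.exists_accPt_of_subset_isCompact (isCompact_Icc (a := (0:ℝ)) (b := M))
      (fun t ht => ⟨(hpos ht).le, hM ht⟩)
    have hfreq : ∃ᶠ w in 𝓝[≠] z, g w = 0 := by
      have hf : ∃ᶠ w in 𝓝 z, w ≠ z ∧ w ∈ S := (accPt_iff_frequently (x := z) (C := S)).mp hacc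
      rw [frequently_nhdsWithin_iff]
      exact hf.mono fun w hw => ⟨hz w hw.2, hw.1⟩
    have heq : Set.EqOn g 0 Set.univ :=
      hga.eqOn_zero_of_preconnected_of_frequently_eq_zero isPreconnected_univ
        (Set.mem_univ z) hfreq
    refine expsum_zero_of_unbdd L hL c (Set.Ioi 0) ?_ (fun t _ => heq (Set.mem_univ t))
    intro ⟨M', hM'⟩
    have := hM' (Set.mem_Ioi.mpr (lt_of_le_of_lt (le_max_left 0 M') (lt_add_one _)))
    have := le_max_right (0:ℝ) M'
    linarith
  · exact expsum_zero_of_unbdd L hL c S hub hz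

-- from CondW: log p < log q < 2 log p
lemma condW_bounds (N p q : ℕ) (hN : 3 ≤ N) (hp : p.Prime) (hq : q.Prime)
    (hW : CondW N p q) : Real.log p < Real.log q ∧ Real.log q < 2 * Real.log p := by
  obtain ⟨a, rfl⟩ : ∃ a, N = a + 3 := ⟨N - 3, by omega⟩
  have hp1 : (1:ℝ) < p := by exact_mod_cast hp.one_lt
  have hq1 : (1:ℝ) < q := by exact_mod_cast hq.one_lt
  have hlp : 0 < Real.log p := Real.log_pos hp1
  have hf1 : 0 < ((Nat.fib (a+1) : ℝ)) := by exact_mod_cast Nat.fib_pos.mpr (by omega)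
  have hf2 : 0 < ((Nat.fib (a+2) : ℝ)) := by exact_mod_cast Nat.fib_pos.mpr (by omega)
  have e1 : (Nat.fib (a+3) : ℝ) = Nat.fib (a+2) + Nat.fib (a+1) := by
    rw [show a + 3 = (a+1) + 2 by ring, Nat.fib_add_two]; push_cast; ring
  have e2 : (Nat.fib (a+2) : ℝ) = Nat.fib (a+1) + Nat.fib a := by
    rw [Nat.fib_add_two]; push_cast; ring
  have hfa : (0:ℝ) ≤ Nat.fib a := by positivity
  have hmono1 : (Nat.fib (a+1) : ℝ) ≤ Nat.fib (a+2) := by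
    exact_mod_cast Nat.fib_mono (by omega)
  have hmono0 : (Nat.fib a : ℝ) ≤ Nat.fib (a+1) := by
    exact_mod_cast Nat.fib_mono (by omega)
  -- ratios
  have r1_ge : (1:ℝ) ≤ (Nat.fib (a+3) : ℝ) / Nat.fib (a+2) := by
    rw [le_div_iff₀ hf2, one_mul, e1]; linarith
  have r2_ge : (1:ℝ) ≤ (Nat.fib (a+2) : ℝ) / Nat.fib (a+1) := by
    rw [le_div_iff₀ hf1, one_mul, e2]; linarith
  have r1_le : (Nat.fib (a+3) : ℝ) / Nat.fib (a+2) ≤ 2 := by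
    rw [div_le_iff₀ hf2, e1]; linarith
  have r2_le : (Nat.fib (a+2) : ℝ) / Nat.fib (a+1) ≤ 2 := by
    rw [div_le_iff₀ hf1, e2]; linarith
  have h1 : (1:ℝ) < Real.log q / Real.log p ∧ Real.log q / Real.log p < 2 := by
    have e3 : a + 3 - 1 = a + 2 := by omega
    have e4 : a + 3 - 2 = a + 1 := by omega
    rw [CondW, e3, e4] at hW
    rcases hW with ⟨hw1, hw2⟩ | ⟨hw1, hw2⟩
    · exact ⟨lt_of_le_of_lt r1_ge hw1, lt_of_lt_of_le hw2 r2_le⟩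
    · exact ⟨lt_of_le_of_lt r2_ge hw1, lt_of_lt_of_le hw2 r1_le⟩
  constructor
  · have := (one_lt_div hlp).mp h1.1; linarith
  · have := (div_lt_iff₀ hlp).mp h1.2; linarith

lemma mmax_pos (p q j : ℕ) (hp : p.Prime) (hj : 1 ≤ j) : 0 < mmax p q j := by
  have hlp : 0 < Real.log p := Real.log_pos (by exact_mod_cast hp.one_lt)
  have hf : 0 < ((Nat.fib j : ℝ)) := by exact_mod_cast Nat.fib_pos.mpr hj
  exact lt_of_lt_of_le (by positivity) (le_max_left _ _)

lemma mmax_step (p q : ℕ) (hlp : 0 < Real.log p) (hlq : 0 < Real.log q)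
    (h1 : Real.log p < Real.log q) (h2 : Real.log q < 2 * Real.log p)
    (j : ℕ) (hj : 1 ≤ j) : mmax p q j < mmax p q (j + 1) := by
  match j, hj with
  | 1, _ =>
    have e : mmax p q 1 = Real.log p := by
      simp [mmax, max_eq_left hlp.le]
    have e2 : mmax p q 2 = max (Real.log p) (Real.log q) := by
      simp [mmax]
    rw [e, e2, max_eq_right h1.le]; exact h1
  | 2, _ =>
    have e2 : mmax p q 2 = Real.log q := by
      simp [mmax, max_eq_right h1.le]
    have e3 : mmax p q 3 = max (2 * Real.log p) (Real.log q) := by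
      simp [mmax]; norm_num
    rw [e2, e3]
    exact lt_of_lt_of_le h2 (le_max_left _ _)
  | (k+3), _ =>
    have ha : (Nat.fib (k+3) : ℝ) < Nat.fib (k+4) := by
      exact_mod_cast Nat.fib_lt_fib_succ (n := k+3) (by omega)
    have hb : (Nat.fib (k+2) : ℝ) < Nat.fib (k+3) := by
      exact_mod_cast Nat.fib_lt_fib_succ (n := k+2) (by omega)
    have e1 : k + 3 - 1 = k + 2 := by omega
    have e2 : k + 3 + 1 = k + 4 := by omega
    have e3 : k + 4 - 1 = k + 3 := by omega
    rw [mmax, mmax, e1, e2, e3]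
    exact max_lt_max (mul_lt_mul_of_pos_right ha hlp) (mul_lt_mul_of_pos_right hb hlq)

lemma mmax_strictmono (p q : ℕ) (hlp : 0 < Real.log p) (hlq : 0 < Real.log q)
    (h1 : Real.log p < Real.log q) (h2 : Real.log q < 2 * Real.log p)
    {a b : ℕ} (ha : 1 ≤ a) (hab : a < b) : mmax p q a < mmax p q b := by
  induction b with
  | zero => omega
  | succ n ih =>
    rcases Nat.lt_succ_iff_lt_or_eq.mp hab with h | h
    · exact lt_trans (ih h) (mmax_step p q hlp hlq h1 h2 n (by omega))
    · subst h; exact mmax_step p q hlp hlq h1 h2 a ha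

end Stmt8Helpers

/-- Lemma `MeasureFunctionsSwitch`: for `N ≥ 3`, primes `p, q` satisfying (W)
and `1 ≤ n ≤ N`, if `x, y ∈ V_n` have `f_x(t) = f_y(t)` for infinitely many `t ∈ (0,∞)`,
then `x = y`. -/
theorem stmt8 (N p q n : ℕ) (hN : 3 ≤ N) (hp : p.Prime) (hq : q.Prime) (hW : CondW N p q)
    (h1n : 1 ≤ n) (hnN : n ≤ N) (x y : Fin N → ℕ)
    (hx : x ∈ Vset N n) (hy : y ∈ Vset N n)
    (hinf : {t : ℝ | 0 < t ∧ fmeas N p q x t = fmeas N p q y t}.Infinite) :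
    x = y := by
    classical
  have hlp : 0 < Real.log p := Real.log_pos (by exact_mod_cast hp.one_lt)
  have hlq : 0 < Real.log q := Real.log_pos (by exact_mod_cast hq.one_lt)
  obtain ⟨h1, h2⟩ := condW_bounds N p q hN hp hq hW
  set L : Fin N → ℝ := fun i => Real.log (mmax p q ((i : ℕ) + 1)) with hLdef
  have hbpos : ∀ i : Fin N, 0 < mmax p q ((i : ℕ) + 1) :=
    fun i => mmax_pos p q _ hp (by omega)
  have hLinj : Function.Injective L := by
    have hmono : StrictMono L := by
      intro i j hij
      exact Real.log_lt_log (hbpos i)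
        (mmax_strictmono p q hlp hlq h1 h2 (by omega) (by exact_mod_cast Nat.add_lt_add_right hij 1))
    exact hmono.injective
  have hz : ∀ t ∈ {t : ℝ | 0 < t ∧ fmeas N p q x t = fmeas N p q y t},
      ∑ i, ((x i : ℝ) - y i) * Real.exp (L i * t) = 0 := by
    intro t ht
    obtain ⟨ht0, hte⟩ := ht
    have key : ∀ A : ℝ, 0 ≤ A → (A ^ (1 / t)) ^ t = A := by
      intro A hA
      rw [← Real.rpow_mul hA, one_div, inv_mul_cancel₀ ht0.ne', Real.rpow_one]
    have hAnn : 0 ≤ ∑ i, (x i : ℝ) * (mmax p q ((i : ℕ) + 1)) ^ t :=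
      Finset.sum_nonneg fun i _ => mul_nonneg (by positivity) (Real.rpow_nonneg (hbpos i).le t)
    have hBnn : 0 ≤ ∑ i, (y i : ℝ) * (mmax p q ((i : ℕ) + 1)) ^ t :=
      Finset.sum_nonneg fun i _ => mul_nonneg (by positivity) (Real.rpow_nonneg (hbpos i).le t)
    have hA : ∑ i, (x i : ℝ) * (mmax p q ((i : ℕ) + 1)) ^ t
        = ∑ i, (y i : ℝ) * (mmax p q ((i : ℕ) + 1)) ^ t := by
      have h := congrArg (fun r : ℝ => r ^ t) hte
      simp only [fmeas] at h
      rwa [key _ hAnn, key _ hBnn] at h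
    have hsub : ∑ i, ((x i : ℝ) - y i) * (mmax p q ((i : ℕ) + 1)) ^ t = 0 := by
      simp only [sub_mul, Finset.sum_sub_distrib, hA, sub_self]
    calc ∑ i, ((x i : ℝ) - y i) * Real.exp (L i * t)
        = ∑ i, ((x i : ℝ) - y i) * (mmax p q ((i : ℕ) + 1)) ^ t := by
          refine Finset.sum_congr rfl fun i _ => ?_
          rw [Real.rpow_def_of_pos (hbpos i)]
      _ = 0 := hsub
  have hc := expsum_zero_of_infinite L hLinj (fun i => (x i : ℝ) - y i) _ hinf
    (fun t ht => ht.1) hz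
  funext i
  have hi := sub_eq_zero.mp (hc i)
  exact_mod_cast hi
end

section
/- Let N ≥ 3 and let i be an integer with 1 ≤ i ≤ N, and suppose z = (z_1,…,z_N) ∈ V_i. If there exists an integer j with 2 ≤ j ≤ i such that z_ℓ = 0 for all ℓ ∉ {j−1, j}, then z = x_i(j+1); in particular z ∈ S_i. -/
open Real

lemma cassini (n : ℕ) : (Nat.fib n : ℤ) * Nat.fib (n+2) = (Nat.fib (n+1))^2 + (-1)^(n+1) := by
  induction n with
  | zero => simp
  | succ n ih =>
    have h3 : (Nat.fib (n+3) : ℤ) = Nat.fib (n+1) + Nat.fib (n+2) := by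
      rw [show n+3 = (n+1)+2 by ring, Nat.fib_add_two]; push_cast; ring
    have h2 : (Nat.fib (n+2) : ℤ) = Nat.fib n + Nat.fib (n+1) := by
      rw [Nat.fib_add_two]; push_cast; ring
    calc (Nat.fib (n+1) : ℤ) * Nat.fib (n+3)
        = Nat.fib (n+1) ^ 2 + Nat.fib (n+1) * Nat.fib (n+2) := by rw [h3]; ring
      _ = (Nat.fib n * Nat.fib (n+2) - (-1)^(n+1)) + Nat.fib (n+1) * Nat.fib (n+2) := by
          rw [ih]; ring
      _ = (Nat.fib (n+2))^2 + (-1)^(n+2) := by rw [h2]; ring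

/-- Lemma `SEquals`: for `N ≥ 3`, `1 ≤ i ≤ N` and `z ∈ V_i`, if there is
`2 ≤ j ≤ i` with `z_ℓ = 0` (1-based entries) for all `ℓ ∉ {j-1, j}`, then `z = x_i(j+1)`;
in particular `z ∈ S_i`. -/
theorem stmt9 (N i : ℕ) (hN : 3 ≤ N) (h1i : 1 ≤ i) (hiN : i ≤ N)
    (z : Fin N → ℕ) (hz : z ∈ Vset N i)
    (j : ℕ) (h2j : 2 ≤ j) (hji : j ≤ i)
    (hzero : ∀ ℓ : Fin N, (ℓ : ℕ) + 1 ≠ j - 1 → (ℓ : ℕ) + 1 ≠ j → z ℓ = 0) :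
    z = xvec N i (j + 1) ∧ z ∈ Sset N i := by
  obtain ⟨hs1, hs2⟩ := hz
  have hj2N : j - 2 < N := by omega
  have hj1N : j - 1 < N := by omega
  set ℓ1 : Fin N := ⟨j-2, hj2N⟩ with hℓ1
  set ℓ2 : Fin N := ⟨j-1, hj1N⟩ with hℓ2
  have hne : ℓ1 ≠ ℓ2 := by simp [hℓ1, hℓ2, Fin.ext_iff]; omega
  have hsum : ∀ w : ℕ → ℕ, ∑ ℓ, z ℓ * w ℓ = z ℓ1 * w (j-2) + z ℓ2 * w (j-1) := by
    intro w
    have hp : z ℓ1 * w (j-2) + z ℓ2 * w (j-1) = ∑ x ∈ ({ℓ1, ℓ2} : Finset (Fin N)), z x * w x := by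
      rw [Finset.sum_pair hne]
    rw [hp]
    refine (Finset.sum_subset (Finset.subset_univ _) ?_).symm
    intro c _ hc
    simp only [Finset.mem_insert, Finset.mem_singleton] at hc
    push_neg at hc
    have h0 : z c = 0 := by
      apply hzero c <;> · simp [hℓ1, hℓ2, Fin.ext_iff] at hc ⊢; omega
    rw [h0, zero_mul]
  have e1 : z ℓ1 * Nat.fib (j-1) + z ℓ2 * Nat.fib j = Nat.fib i := by
    rw [← hs1, hsum (fun m => Nat.fib (m+1))]
    rw [show j-2+1 = j-1 by omega, show j-1+1 = j by omega]
  have e2 : z ℓ1 * Nat.fib (j-2) + z ℓ2 * Nat.fib (j-1) = Nat.fib (i-1) := by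
    rw [← hs2, hsum (fun m => Nat.fib m)]
  have f1 : Nat.fib i = Nat.fib (i-j) * Nat.fib (j-1) + Nat.fib (i-j+1) * Nat.fib j := by
    have := Nat.fib_add (i-j) (j-1)
    rw [show i-j+(j-1)+1 = i by omega, show j-1+1 = j by omega] at this
    exact this
  have f2 : Nat.fib (i-1) = Nat.fib (i-j) * Nat.fib (j-2) + Nat.fib (i-j+1) * Nat.fib (j-1) := by
    have := Nat.fib_add (i-j) (j-2)
    rw [show i-j+(j-2)+1 = i-1 by omega, show j-2+1 = j-1 by omega] at this
    exact this
  -- integer algebra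
  set A : ℤ := (z ℓ1 : ℤ) - Nat.fib (i-j) with hA
  set B : ℤ := (z ℓ2 : ℤ) - Nat.fib (i-j+1) with hB
  have E1 : A * Nat.fib (j-1) + B * Nat.fib j = 0 := by
    have h1 : (z ℓ1 : ℤ) * Nat.fib (j-1) + (z ℓ2 : ℤ) * Nat.fib j = Nat.fib i := by
      exact_mod_cast congrArg (fun n : ℕ => (n : ℤ)) e1
    have h2 : ((Nat.fib (i-j) : ℤ)) * Nat.fib (j-1) + ((Nat.fib (i-j+1) : ℤ)) * Nat.fib j = Nat.fib i := by
      exact_mod_cast (congrArg (fun n : ℕ => (n : ℤ)) f1).symm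
    rw [hA, hB]; linear_combination h1 - h2
  have E2 : A * Nat.fib (j-2) + B * Nat.fib (j-1) = 0 := by
    have h1 : (z ℓ1 : ℤ) * Nat.fib (j-2) + (z ℓ2 : ℤ) * Nat.fib (j-1) = Nat.fib (i-1) := by
      exact_mod_cast congrArg (fun n : ℕ => (n : ℤ)) e2
    have h2 : ((Nat.fib (i-j) : ℤ)) * Nat.fib (j-2) + ((Nat.fib (i-j+1) : ℤ)) * Nat.fib (j-1) = Nat.fib (i-1) := by
      exact_mod_cast (congrArg (fun n : ℕ => (n : ℤ)) f2).symm
    rw [hA, hB]; linear_combination h1 - h2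
  have hcas := cassini (j-2)
  rw [show j-2+2 = j by omega, show j-2+1 = j-1 by omega] at hcas
  have hA0 : A = 0 := by
    have h : A * (-1)^(j-1) = 0 := by linear_combination (Nat.fib j : ℤ) * E2 - (Nat.fib (j-1) : ℤ) * E1 - A * hcas
    rcases mul_eq_zero.mp h with h | h
    · exact h
    · exact absurd h (pow_ne_zero _ (by norm_num))
  have hB0 : B = 0 := by
    have hfj : (0:ℤ) < Nat.fib j := by
      exact_mod_cast Nat.fib_pos.mpr (by omega)
    have : B * (Nat.fib j : ℤ) = 0 := by rw [hA0, zero_mul, zero_add] at E1; exact E1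
    rcases mul_eq_zero.mp this with h | h
    · exact h
    · omega
  have hz1 : z ℓ1 = Nat.fib (i-j) := by omega
  have hz2 : z ℓ2 = Nat.fib (i-j+1) := by omega
  have hmain : z = xvec N i (j+1) := by
    funext ℓ
    unfold xvec
    by_cases hc1 : (ℓ : ℕ) + 3 = j + 1
    · rw [if_pos hc1]
      have : ℓ = ℓ1 := by simp [hℓ1, Fin.ext_iff]; omega
      rw [this, hz1, show i + 1 - (j+1) = i - j by omega]
    · rw [if_neg hc1]
      by_cases hc2 : (ℓ : ℕ) + 2 = j + 1
      · rw [if_pos hc2]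
        have : ℓ = ℓ2 := by simp [hℓ2, Fin.ext_iff]; omega
        rw [this, hz2, show i + 2 - (j+1) = i - j + 1 by omega]
      · rw [if_neg hc2]
        exact hzero ℓ (by omega) (by omega)
  refine ⟨hmain, ?_⟩
  rw [Sset, if_neg (by omega : ¬ i = 1)]
  exact ⟨j+1, by omega, by omega, hmain⟩
end

section
/- Let N ≥ 3 be an integer, let p, q be primes satisfying condition (W), and let n be an integer with 1 ≤ n ≤ N. If z ∈ V_n and (x^(1),…,x^(K)) is a factorization of z with x^(k) ∈ V_{i_k}, then U_z ⊆ ∩_{k=1}^K U_{x^(k)}, where for x ∈ V_j the infimum attaining set is U_x = {t ∈ (0,∞) : f_x(t) = min{f_y(t) : y ∈ V_j}}. -/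
open Real

/-- Lemma `FactorizationLemma`: for `N ≥ 3`, primes `p,q` satisfying (W),
`1 ≤ n ≤ N`, `z ∈ V_n` and a factorization `(x^(1),…,x^(K))` of `z` with `x^(k) ∈ V_{idx k}`,
we have `U_z ⊆ ∩_k U_{x^(k)}`. -/
theorem stmt12 (N p q n : ℕ) (hN : 3 ≤ N) (hp : p.Prime) (hq : q.Prime) (hW : CondW N p q)
    (h1n : 1 ≤ n) (hnN : n ≤ N) (z : Fin N → ℕ) (hz : z ∈ Vset N n)
    (K : ℕ) (idx : Fin K → ℕ) (x : Fin K → Fin N → ℕ)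
    (hfac : IsFactorization N n z idx x) :
    Uset N p q n z ⊆ ⋂ k : Fin K, Uset N p q (idx k) (x k) := by
  obtain ⟨hx, hzsum⟩ := hfac
  intro t ht
  obtain ⟨ht0, _, hlb⟩ := ht
  refine Set.mem_iInter.mpr fun k => ⟨ht0, ⟨x k, (hx k).2.2, rfl⟩, ?_⟩
  rintro _ ⟨y, hy, rfl⟩
  -- the additive quantity S
  set S : (Fin N → ℕ) → ℝ := fun w => ∑ i, (w i : ℝ) * mmax p q ((i : ℕ) + 1) ^ t with hSdef
  have hmmax : ∀ i : ℕ, 0 ≤ mmax p q i := by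
    intro i
    refine le_trans ?_ (le_max_left _ _)
    exact mul_nonneg (Nat.cast_nonneg _) (Real.log_natCast_nonneg p)
  have hS0 : ∀ w, 0 ≤ S w := fun w =>
    Finset.sum_nonneg fun i _ =>
      mul_nonneg (Nat.cast_nonneg _) (Real.rpow_nonneg (hmmax _) t)
  have hf : ∀ w, fmeas N p q w t = S w ^ (1 / t) := fun w => rfl
  -- the modified factorization
  set z' : Fin N → ℕ := ∑ j, Function.update x k y j with hz'def
  have hupd : ∀ j : Fin K, j ≠ k → Function.update x k y j = x j := fun j hj =>
    Function.update_of_ne hj _ _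
  -- nat linearity
  have natlin : ∀ (w : Fin K → Fin N → ℕ) (c : Fin N → ℕ),
      ∑ i, (∑ j, w j) i * c i = ∑ j, ∑ i, w j i * c i := by
    intro w c
    simp only [Finset.sum_apply, Finset.sum_mul]
    exact Finset.sum_comm
  have swapsum : ∀ (f g : Fin K → ℝ), (∀ j, j ≠ k → f j = g j) →
      (∑ j, f j) + g k = (∑ j, g j) + f k := by
    intro f g h
    rw [← Finset.add_sum_erase _ f (Finset.mem_univ k),
      ← Finset.add_sum_erase _ g (Finset.mem_univ k),
      Finset.sum_congr rfl fun j hj => h j (Finset.ne_of_mem_erase hj)]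
    ring
  have swapsumN : ∀ (f g : Fin K → ℕ), (∀ j, j ≠ k → f j = g j) → f k = g k →
      (∑ j, f j) = ∑ j, g j := by
    intro f g h hk
    refine Finset.sum_congr rfl fun j _ => ?_
    by_cases hj : j = k
    · rw [hj, hk]
    · exact h j hj
  -- z' ∈ V n
  have hz' : z' ∈ Vset N n := by
    obtain ⟨hz1, hz2⟩ := hz
    constructor
    · rw [hz'def, natlin, ← hz1, hzsum, natlin]
      refine swapsumN _ _ (fun j hj => by rw [hupd j hj]) ?_
      rw [Function.update_self, hy.1, (hx k).2.2.1]
    · rw [hz'def, natlin, ← hz2, hzsum, natlin]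
      refine swapsumN _ _ (fun j hj => by rw [hupd j hj]) ?_
      rw [Function.update_self, hy.2, (hx k).2.2.2]
  -- real linearity of S
  have reallin : ∀ (w : Fin K → Fin N → ℕ), S (∑ j, w j) = ∑ j, S (w j) := by
    intro w
    rw [hSdef]
    simp only [Finset.sum_apply, Nat.cast_sum, Finset.sum_mul]
    exact Finset.sum_comm
  -- key identity : S z' + S (x k) = S z + S y
  have hkey : S z' + S (x k) = S z + S y := by
    rw [hz'def, hzsum, reallin, reallin]
    have h1 : (∑ j, S (Function.update x k y j)) + S (x k) =
        (∑ j, S (x j)) + S (Function.update x k y k) :=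
      swapsum _ _ fun j hj => congrArg S (hupd j hj)
    rwa [Function.update_self] at h1
  -- S z ≤ S z'
  have hmono : fmeas N p q z t ≤ fmeas N p q z' t := hlb ⟨z', hz', rfl⟩
  have hmono' : S z ^ (1 / t) ≤ S z' ^ (1 / t) := hmono
  have hinv : ∀ a : ℝ, 0 ≤ a → (a ^ (1 / t)) ^ t = a := by
    intro a ha
    rw [← Real.rpow_mul ha, one_div_mul_cancel (ne_of_gt ht0), Real.rpow_one]
  have hSzz' : S z ≤ S z' := by
    have h2 := Real.rpow_le_rpow (Real.rpow_nonneg (hS0 z) _) hmono' (le_of_lt ht0)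
    rwa [hinv _ (hS0 z), hinv _ (hS0 z')] at h2
  have hSle : S (x k) ≤ S y := by linarith
  show S (x k) ^ (1 / t) ≤ S y ^ (1 / t)
  exact Real.rpow_le_rpow (hS0 (x k)) hSle (by positivity)
end

section
/- Let N ≥ 3 be an integer, let (p,q) be a pair of primes compatible with N, and let n be an integer with 1 ≤ n ≤ N. Then min{f_x(t) : x ∈ C_n} = min{f_x(t) : x ∈ V_n} for all t > 0. -/
open Real

section Stmt13Aux

open Real

private lemma stmt13aux_logs_lt {N p q : ℕ} (hN : 3 ≤ N) (hp : p.Prime) (hq : q.Prime)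
    (hW : CondW N p q) :
    Real.log p < Real.log q ∧ Real.log q < 2 * Real.log p := by
  have hL : (0:ℝ) < Real.log p := Real.log_pos (by exact_mod_cast hp.one_lt)
  have hf1 : 0 < Nat.fib (N-1) := Nat.fib_pos.2 (by omega)
  have hf2 : 0 < Nat.fib (N-2) := Nat.fib_pos.2 (by omega)
  have e1 : Nat.fib N = Nat.fib (N-1) + Nat.fib (N-2) := by
    have := Nat.fib_add_two (n := N-2)
    have h1 : N-2+2 = N := by omega
    have h2 : N-2+1 = N-1 := by omega
    rw [h1, h2] at this; omega
  have e2 : Nat.fib (N-1) = Nat.fib (N-2) + Nat.fib (N-3) := by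
    have := Nat.fib_add_two (n := N-3)
    have h1 : N-3+2 = N-1 := by omega
    have h2 : N-3+1 = N-2 := by omega
    rw [h1, h2] at this; omega
  have mono1 : Nat.fib (N-2) ≤ Nat.fib (N-1) := Nat.fib_mono (by omega)
  have mono2 : Nat.fib (N-3) ≤ Nat.fib (N-2) := Nat.fib_mono (by omega)
  have hf1R : (0:ℝ) < Nat.fib (N-1) := by exact_mod_cast hf1
  have hf2R : (0:ℝ) < Nat.fib (N-2) := by exact_mod_cast hf2
  have r1lb : (1:ℝ) ≤ (Nat.fib N : ℝ) / Nat.fib (N-1) := by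
    rw [le_div_iff₀ hf1R]
    have : Nat.fib (N-1) ≤ Nat.fib N := Nat.fib_mono (by omega)
    have := (Nat.cast_le (α := ℝ)).2 this
    linarith
  have r1ub : (Nat.fib N : ℝ) / Nat.fib (N-1) ≤ 2 := by
    rw [div_le_iff₀ hf1R]
    have : Nat.fib N ≤ 2 * Nat.fib (N-1) := by omega
    exact_mod_cast by push_cast; exact_mod_cast this
  have r2lb : (1:ℝ) ≤ (Nat.fib (N-1) : ℝ) / Nat.fib (N-2) := by
    rw [le_div_iff₀ hf2R]
    have : Nat.fib (N-2) ≤ Nat.fib (N-1) := mono1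
    have := (Nat.cast_le (α := ℝ)).2 this
    linarith
  have r2ub : (Nat.fib (N-1) : ℝ) / Nat.fib (N-2) ≤ 2 := by
    rw [div_le_iff₀ hf2R]
    have : Nat.fib (N-1) ≤ 2 * Nat.fib (N-2) := by omega
    exact_mod_cast this
  have hQL1 : 1 < Real.log q / Real.log p ∧ Real.log q / Real.log p < 2 := by
    rcases hW with ⟨h1, h2⟩ | ⟨h1, h2⟩
    · exact ⟨lt_of_le_of_lt r1lb h1, lt_of_lt_of_le h2 r2ub⟩
    · exact ⟨lt_of_le_of_lt r2lb h1, lt_of_lt_of_le h2 r1ub⟩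
  constructor
  · have := (one_lt_div hL).1 hQL1.1; linarith
  · have := (div_lt_iff₀ hL).1 hQL1.2; linarith

private lemma stmt13aux_mmax_pos {p q : ℕ} (hL : (0:ℝ) < Real.log p) {k : ℕ} (hk : 1 ≤ k) :
    0 < mmax p q k := by
  have : (0:ℝ) < (Nat.fib k : ℝ) * Real.log p := by
    have : 0 < Nat.fib k := Nat.fib_pos.2 (by omega)
    have : (0:ℝ) < Nat.fib k := by exact_mod_cast this
    positivity
  exact lt_max_of_lt_left this

private lemma stmt13aux_mmax_mono {p q : ℕ} (hL : (0:ℝ) < Real.log p)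
    (hLQ : Real.log p < Real.log q)
    (hQ2L : Real.log q < 2 * Real.log p) {k : ℕ} (hk : 1 ≤ k) :
    mmax p q k < mmax p q (k+1) := by
  have hQ : (0:ℝ) < Real.log q := hL.trans hLQ
  have hfk : (1:ℝ) ≤ Nat.fib k := by
    have : 1 ≤ Nat.fib k := Nat.fib_pos.2 (by omega)
    exact_mod_cast this
  have h1 : (Nat.fib k : ℝ) * Real.log p < mmax p q (k+1) := by
    have : (Nat.fib k : ℝ) * Real.log p < (Nat.fib k : ℝ) * Real.log q := by
      exact mul_lt_mul_of_pos_left hLQ (by linarith)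
    refine lt_of_lt_of_le this ?_
    have : (k+1) - 1 = k := by omega
    rw [mmax, this]
    exact le_max_right _ _
  have h2 : (Nat.fib (k-1) : ℝ) * Real.log q < mmax p q (k+1) := by
    rcases Nat.eq_or_lt_of_le hk with h | h
    · have : k - 1 = 0 := by omega
      rw [this]
      simp only [Nat.fib_zero, Nat.cast_zero, zero_mul]
      exact stmt13aux_mmax_pos hL (by omega)
    · have hfib : Nat.fib (k+1) ≥ 2 * Nat.fib (k-1) := by
        have e : Nat.fib (k+1) = Nat.fib k + Nat.fib (k-1) := by
          have := Nat.fib_add_two (n := k-1)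
          have h1 : k-1+2 = k+1 := by omega
          have h2 : k-1+1 = k := by omega
          rw [h1, h2] at this; omega
        have : Nat.fib (k-1) ≤ Nat.fib k := Nat.fib_mono (by omega)
        omega
      have hfibR : (2:ℝ) * Nat.fib (k-1) ≤ Nat.fib (k+1) := by exact_mod_cast hfib
      have hfk1 : (1:ℝ) ≤ Nat.fib (k-1) := by
        have : 1 ≤ Nat.fib (k-1) := Nat.fib_pos.2 (by omega)
        exact_mod_cast this
      have : (Nat.fib (k-1) : ℝ) * Real.log q < (Nat.fib (k+1) : ℝ) * Real.log p := by
        calc (Nat.fib (k-1) : ℝ) * Real.log q < (Nat.fib (k-1) : ℝ) * (2 * Real.log p) :=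
              mul_lt_mul_of_pos_left hQ2L (by linarith)
          _ = (2 * (Nat.fib (k-1):ℝ)) * Real.log p := by ring
          _ ≤ (Nat.fib (k+1) : ℝ) * Real.log p := mul_le_mul_of_nonneg_right hfibR hL.le
      exact lt_of_lt_of_le this (le_max_left _ _)
  exact max_lt h1 h2

private lemma stmt13aux_sign {A B C τ t : ℝ} (hC : 0 < C) (hCB : C ≤ B) (hBA : B < A)
    (heq : A ^ τ = B ^ τ + C ^ τ) :
    (t ≤ τ → A ^ t ≤ B ^ t + C ^ t) ∧ (τ < t → B ^ t + C ^ t < A ^ t) := by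
  have hB : 0 < B := hC.trans_le hCB
  have hA : 0 < A := hB.trans hBA
  have hr : 0 < B / A := div_pos hB hA
  have hr1 : B / A < 1 := (div_lt_one hA).2 hBA
  have hs : 0 < C / A := div_pos hC hA
  have hs1 : C / A < 1 := (div_lt_one hA).2 (hCB.trans_lt hBA)
  have hAτ : (0:ℝ) < A ^ τ := Real.rpow_pos_of_pos hA τ
  have hsumτ : (B/A) ^ τ + (C/A) ^ τ = 1 := by
    rw [Real.div_rpow hB.le hA.le, Real.div_rpow hC.le hA.le]
    field_simp
    linarith [heq]
  have key : ∀ s : ℝ, B ^ s + C ^ s = A ^ s * ((B/A) ^ s + (C/A) ^ s) := by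
    intro s
    rw [Real.div_rpow hB.le hA.le, Real.div_rpow hC.le hA.le]
    have hAs : (0:ℝ) < A ^ s := Real.rpow_pos_of_pos hA s
    field_simp
  constructor
  · intro hle
    have h1 : (B/A) ^ τ ≤ (B/A) ^ t := Real.rpow_le_rpow_of_exponent_ge hr hr1.le hle
    have h2 : (C/A) ^ τ ≤ (C/A) ^ t := Real.rpow_le_rpow_of_exponent_ge hs hs1.le hle
    have hAt : (0:ℝ) < A ^ t := Real.rpow_pos_of_pos hA t
    rw [key t]
    nlinarith [hsumτ]
  · intro hlt
    have h1 : (B/A) ^ t < (B/A) ^ τ := Real.rpow_lt_rpow_of_exponent_gt hr hr1 hlt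
    have h2 : (C/A) ^ t < (C/A) ^ τ := Real.rpow_lt_rpow_of_exponent_gt hs hs1 hlt
    have hAt : (0:ℝ) < A ^ t := Real.rpow_pos_of_pos hA t
    rw [key t]
    nlinarith [hsumτ]

private lemma stmt13aux_sum_add_bump {N : ℕ} {R : Type*} [NonAssocSemiring R]
    (v : Fin N → R) (a : Fin N) (c : Fin N → R) :
    ∑ k, (v k + if k = a then 1 else 0) * c k = (∑ k, v k * c k) + c a := by
  simp [add_mul, Finset.sum_add_distrib, ite_mul, Finset.sum_ite_eq']

open Classical in
private noncomputable def stmt13aux_gfun (N : ℕ) (tt : ℕ → ℝ) (t : ℝ) (i : ℕ) : ℕ :=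
  if 3 ≤ i ∧ i ≤ N+1 ∧ t ≤ tt i then 1 else 3^i

private lemma stmt13aux_gfun_ge_one (N : ℕ) (tt : ℕ → ℝ) (t : ℝ) (i : ℕ) :
    1 ≤ stmt13aux_gfun N tt t i := by
  unfold stmt13aux_gfun; split
  · exact le_rfl
  · exact Nat.one_le_pow _ _ (by norm_num)

private lemma stmt13aux_gfun_le (N : ℕ) (tt : ℕ → ℝ) (t : ℝ) (i : ℕ) :
    stmt13aux_gfun N tt t i ≤ 3^i := by
  unfold stmt13aux_gfun; split
  · exact Nat.one_le_pow _ _ (by norm_num)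
  · exact le_rfl

private lemma stmt13aux_reduce (N p q n : ℕ) (tt : ℕ → ℝ) (t : ℝ)
    (hsub : ∀ m, 3 ≤ m → m ≤ N+1 → t ≤ tt m →
      mmax p q m ^ t ≤ mmax p q (m-1) ^ t + mmax p q (m-2) ^ t)
    (hsup : ∀ m, 3 ≤ m → m ≤ N+1 → tt m < t →
      mmax p q (m-1) ^ t + mmax p q (m-2) ^ t ≤ mmax p q m ^ t)
    (hanti : ∀ a b : ℕ, 3 ≤ a → a ≤ b → b ≤ N+1 → tt b ≤ tt a) :
    ∀ x ∈ Vset N n, ∃ z ∈ Cset N n,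
      (∑ k : Fin N, (z k:ℝ) * mmax p q ((k:ℕ)+1) ^ t)
        ≤ ∑ k : Fin N, (x k:ℝ) * mmax p q ((k:ℕ)+1) ^ t := by
  set w : Fin N → ℝ := fun k => mmax p q ((k:ℕ)+1) ^ t with hw
  set g : Fin N → ℕ := fun k => stmt13aux_gfun N tt t ((k:ℕ)+1) with hg
  suffices H : ∀ M : ℕ, ∀ x ∈ Vset N n, (∑ k, x k * g k) ≤ M → ∃ z ∈ Cset N n,
      (∑ k, (z k:ℝ) * w k) ≤ ∑ k, (x k:ℝ) * w k by
    intro x hx; exact H _ x hx le_rfl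
  intro M
  induction M using Nat.strong_induction_on with
  | _ M ih =>
    intro x hx hμ
    by_cases hACF : ACF N x
    · exact ⟨x, ⟨hx, hACF⟩, le_rfl⟩
    · simp only [ACF, not_forall] at hACF
      obtain ⟨j, hj, hprod, i, hij, hxi⟩ := hACF
      have hxj : x j ≠ 0 := by intro h; exact hprod (by simp [h])
      have hxj' : x ⟨(j:ℕ)+1, hj⟩ ≠ 0 := by intro h; exact hprod (by simp [h])
      set j' : Fin N := ⟨(j:ℕ)+1, hj⟩ with hj'def
      have hji : (j:ℕ)+2 ≤ (i:ℕ) := by omega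
      have hiN : (i:ℕ) < N := i.isLt
      by_cases hcase : t ≤ tt ((j:ℕ)+3)
      · -- merge j, j+1 into j+2
        have hj2 : (j:ℕ)+2 < N := by omega
        set j'' : Fin N := ⟨(j:ℕ)+2, hj2⟩ with hj''def
        set y : Fin N → ℕ :=
          fun k => x k - (if k = j then 1 else 0) - (if k = j' then 1 else 0) with hy
        have hjj' : j ≠ j' := by
          intro h; apply_fun (Fin.val) at h; simp [hj'def] at h
        have hdecomp : x = fun k => y k + (if k = j then 1 else 0) + (if k = j' then 1 else 0) := by
          funext k
          simp only [hy]
          split_ifs with h1 h2 h2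
          · exact absurd (h1.symm.trans h2) hjj'
          · have : 1 ≤ x j := Nat.one_le_iff_ne_zero.2 hxj
            subst h1; omega
          · have : 1 ≤ x j' := Nat.one_le_iff_ne_zero.2 hxj'
            subst h2; omega
          · omega
        set x' : Fin N → ℕ := fun k => y k + (if k = j'' then 1 else 0) with hx'
        have fib1 : Nat.fib ((j:ℕ)+1) + Nat.fib ((j:ℕ)+2) = Nat.fib ((j:ℕ)+3) :=
          (Nat.fib_add_two (n := (j:ℕ)+1)).symm
        have fib2 : Nat.fib (j:ℕ) + Nat.fib ((j:ℕ)+1) = Nat.fib ((j:ℕ)+2) :=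
          (Nat.fib_add_two (n := (j:ℕ))).symm
        have s1 : ∑ k, x k * Nat.fib ((k:ℕ)+1)
            = (∑ k, y k * Nat.fib ((k:ℕ)+1)) + Nat.fib ((j:ℕ)+1) + Nat.fib ((j:ℕ)+2) := by
          rw [hdecomp, stmt13aux_sum_add_bump (fun k => y k + if k = j then 1 else 0) j'
            (fun k => Nat.fib ((k:ℕ)+1)), stmt13aux_sum_add_bump y j (fun k => Nat.fib ((k:ℕ)+1))]
        have s2 : ∑ k, x k * Nat.fib (k:ℕ)
            = (∑ k, y k * Nat.fib (k:ℕ)) + Nat.fib (j:ℕ) + Nat.fib ((j:ℕ)+1) := by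
          rw [hdecomp, stmt13aux_sum_add_bump (fun k => y k + if k = j then 1 else 0) j'
            (fun k => Nat.fib (k:ℕ)), stmt13aux_sum_add_bump y j (fun k => Nat.fib (k:ℕ))]
        have s1' : ∑ k, x' k * Nat.fib ((k:ℕ)+1)
            = (∑ k, y k * Nat.fib ((k:ℕ)+1)) + Nat.fib ((j:ℕ)+3) := by
          rw [hx', stmt13aux_sum_add_bump y j'' (fun k => Nat.fib ((k:ℕ)+1))]
        have s2' : ∑ k, x' k * Nat.fib (k:ℕ)
            = (∑ k, y k * Nat.fib (k:ℕ)) + Nat.fib ((j:ℕ)+2) := by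
          rw [hx', stmt13aux_sum_add_bump y j'' (fun k => Nat.fib (k:ℕ))]
        have hx'V : x' ∈ Vset N n := by
          obtain ⟨hv1, hv2⟩ := hx
          constructor
          · rw [s1']; rw [s1] at hv1; omega
          · rw [s2']; rw [s2] at hv2; omega
        have c1 : ∑ k, (x k:ℝ) * w k = (∑ k, (y k:ℝ) * w k) + w j + w j' := by
          rw [hdecomp]; push_cast
          rw [stmt13aux_sum_add_bump (fun k => (y k:ℝ) + if k = j then 1 else 0) j' w,
            stmt13aux_sum_add_bump (fun k => (y k:ℝ)) j w]
        have c1' : ∑ k, (x' k:ℝ) * w k = (∑ k, (y k:ℝ) * w k) + w j'' := by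
          rw [hx']; push_cast
          rw [stmt13aux_sum_add_bump (fun k => (y k:ℝ)) j'' w]
        have m1 : ∑ k, x k * g k = (∑ k, y k * g k) + g j + g j' := by
          rw [hdecomp, stmt13aux_sum_add_bump (fun k => y k + if k = j then 1 else 0) j' g,
            stmt13aux_sum_add_bump y j g]
        have m1' : ∑ k, x' k * g k = (∑ k, y k * g k) + g j'' := by
          rw [hx', stmt13aux_sum_add_bump y j'' g]
        -- weights
        have hwle : w j'' ≤ w j + w j' := by
          have := hsub ((j:ℕ)+3) (by omega) (by omega) hcase
          have e1 : (j:ℕ)+3-1 = (j:ℕ)+2 := by omega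
          have e2 : (j:ℕ)+3-2 = (j:ℕ)+1 := by omega
          rw [e1, e2] at this
          have w1 : w j = mmax p q ((j:ℕ)+1) ^ t := rfl
          have w2 : w j' = mmax p q ((j:ℕ)+2) ^ t := rfl
          have w3 : w j'' = mmax p q ((j:ℕ)+3) ^ t := rfl
          rw [w1, w2, w3]
          linarith
        have hcost : ∑ k, (x' k:ℝ) * w k ≤ ∑ k, (x k:ℝ) * w k := by
          rw [c1, c1']; linarith
        have hmeas : ∑ k, x' k * g k < ∑ k, x k * g k := by
          rw [m1, m1']
          have hgj'' : g j'' = 1 := by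
            simp only [hg]
            have e5 : ((j'':Fin N):ℕ)+1 = (j:ℕ)+3 := rfl
            rw [e5, stmt13aux_gfun, if_pos ⟨by omega, by omega, hcase⟩]
          have h1 : 1 ≤ g j := stmt13aux_gfun_ge_one N tt t _
          have h2 : 1 ≤ g j' := stmt13aux_gfun_ge_one N tt t _
          rw [hgj'']
          omega
        obtain ⟨z, hz, hzc⟩ := ih (∑ k, x' k * g k) (by omega) x' hx'V le_rfl
        exact ⟨z, hz, hzc.trans hcost⟩
      · -- split at i
        have hi2 : 2 ≤ (i:ℕ) := by omega
        have hiN' : (i:ℕ)-1 < N := by omega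
        have hiN'' : (i:ℕ)-2 < N := by omega
        set i' : Fin N := ⟨(i:ℕ)-1, hiN'⟩ with hi'def
        set i'' : Fin N := ⟨(i:ℕ)-2, hiN''⟩ with hi''def
        have hii' : i'' ≠ i' := by
          intro h; apply_fun (Fin.val) at h; simp [hi'def, hi''def] at h; omega
        set y : Fin N → ℕ := fun k => x k - (if k = i then 1 else 0) with hy
        have hdecomp : x = fun k => y k + (if k = i then 1 else 0) := by
          funext k
          simp only [hy]
          split_ifs with h1
          · have : 1 ≤ x i := Nat.one_le_iff_ne_zero.2 hxi
            subst h1; omega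
          · omega
        set x' : Fin N → ℕ :=
          fun k => y k + (if k = i'' then 1 else 0) + (if k = i' then 1 else 0) with hx'
        have fib1 : Nat.fib ((i:ℕ)-1) + Nat.fib (i:ℕ) = Nat.fib ((i:ℕ)+1) := by
          have := (Nat.fib_add_two (n := (i:ℕ)-1)).symm
          have e1 : (i:ℕ)-1+2 = (i:ℕ)+1 := by omega
          have e2 : (i:ℕ)-1+1 = (i:ℕ) := by omega
          rw [e1, e2] at this; omega
        have fib2 : Nat.fib ((i:ℕ)-2) + Nat.fib ((i:ℕ)-1) = Nat.fib (i:ℕ) := by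
          have := (Nat.fib_add_two (n := (i:ℕ)-2)).symm
          have e1 : (i:ℕ)-2+2 = (i:ℕ) := by omega
          have e2 : (i:ℕ)-2+1 = (i:ℕ)-1 := by omega
          rw [e1, e2] at this; omega
        have s1 : ∑ k, x k * Nat.fib ((k:ℕ)+1)
            = (∑ k, y k * Nat.fib ((k:ℕ)+1)) + Nat.fib ((i:ℕ)+1) := by
          rw [hdecomp, stmt13aux_sum_add_bump y i (fun k => Nat.fib ((k:ℕ)+1))]
        have s2 : ∑ k, x k * Nat.fib (k:ℕ)
            = (∑ k, y k * Nat.fib (k:ℕ)) + Nat.fib (i:ℕ) := by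
          rw [hdecomp, stmt13aux_sum_add_bump y i (fun k => Nat.fib (k:ℕ))]
        have s1' : ∑ k, x' k * Nat.fib ((k:ℕ)+1)
            = (∑ k, y k * Nat.fib ((k:ℕ)+1)) + Nat.fib ((i:ℕ)-2+1) + Nat.fib ((i:ℕ)-1+1) := by
          rw [hx', stmt13aux_sum_add_bump (fun k => y k + if k = i'' then 1 else 0) i'
            (fun k => Nat.fib ((k:ℕ)+1)), stmt13aux_sum_add_bump y i'' (fun k => Nat.fib ((k:ℕ)+1))]
        have s2' : ∑ k, x' k * Nat.fib (k:ℕ)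
            = (∑ k, y k * Nat.fib (k:ℕ)) + Nat.fib ((i:ℕ)-2) + Nat.fib ((i:ℕ)-1) := by
          rw [hx', stmt13aux_sum_add_bump (fun k => y k + if k = i'' then 1 else 0) i'
            (fun k => Nat.fib (k:ℕ)), stmt13aux_sum_add_bump y i'' (fun k => Nat.fib (k:ℕ))]
        have hx'V : x' ∈ Vset N n := by
          obtain ⟨hv1, hv2⟩ := hx
          constructor
          · rw [s1']; rw [s1] at hv1
            have e1 : (i:ℕ)-2+1 = (i:ℕ)-1 := by omega
            have e2 : (i:ℕ)-1+1 = (i:ℕ) := by omega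
            rw [e1, e2]; omega
          · rw [s2']; rw [s2] at hv2; omega
        have c1 : ∑ k, (x k:ℝ) * w k = (∑ k, (y k:ℝ) * w k) + w i := by
          rw [hdecomp]; push_cast
          rw [stmt13aux_sum_add_bump (fun k => (y k:ℝ)) i w]
        have c1' : ∑ k, (x' k:ℝ) * w k = (∑ k, (y k:ℝ) * w k) + w i'' + w i' := by
          rw [hx']; push_cast
          rw [stmt13aux_sum_add_bump (fun k => (y k:ℝ) + if k = i'' then 1 else 0) i' w,
            stmt13aux_sum_add_bump (fun k => (y k:ℝ)) i'' w]
        have m1 : ∑ k, x k * g k = (∑ k, y k * g k) + g i := by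
          rw [hdecomp, stmt13aux_sum_add_bump y i g]
        have m1' : ∑ k, x' k * g k = (∑ k, y k * g k) + g i'' + g i' := by
          rw [hx', stmt13aux_sum_add_bump (fun k => y k + if k = i'' then 1 else 0) i' g,
            stmt13aux_sum_add_bump y i'' g]
        push_neg at hcase
        have httle : tt ((i:ℕ)+1) ≤ tt ((j:ℕ)+3) := hanti _ _ (by omega) (by omega) (by omega)
        have htlt : tt ((i:ℕ)+1) < t := lt_of_le_of_lt httle hcase
        have hwle : w i' + w i'' ≤ w i := by
          have := hsup ((i:ℕ)+1) (by omega) (by omega) htlt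
          have e1 : (i:ℕ)+1-1 = (i:ℕ) := by omega
          have e2 : (i:ℕ)+1-2 = (i:ℕ)-1 := by omega
          rw [e1, e2] at this
          have vi' : ((i':Fin N):ℕ) = (i:ℕ)-1 := rfl
          have vi'' : ((i'':Fin N):ℕ) = (i:ℕ)-2 := rfl
          have e3 : ((i':Fin N):ℕ) + 1 = (i:ℕ) := by omega
          have e4 : ((i'':Fin N):ℕ) + 1 = (i:ℕ)-1 := by omega
          have w1 : w i' = mmax p q ((i:ℕ)) ^ t := by simp only [hw]; rw [e3]
          have w2 : w i'' = mmax p q ((i:ℕ)-1) ^ t := by simp only [hw]; rw [e4]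
          have w3 : w i = mmax p q ((i:ℕ)+1) ^ t := rfl
          rw [w1, w2, w3]
          linarith
        have hcost : ∑ k, (x' k:ℝ) * w k ≤ ∑ k, (x k:ℝ) * w k := by
          rw [c1, c1']; linarith
        have hmeas : ∑ k, x' k * g k < ∑ k, x k * g k := by
          rw [m1, m1']
          have hgi : g i = 3^((i:ℕ)+1) := by
            simp only [hg, stmt13aux_gfun]
            rw [if_neg (by push_neg; intro _ _; linarith)]
          have vi' : ((i':Fin N):ℕ) = (i:ℕ)-1 := rfl
          have vi'' : ((i'':Fin N):ℕ) = (i:ℕ)-2 := rfl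
          have e3 : ((i':Fin N):ℕ) + 1 = (i:ℕ) := by omega
          have e4 : ((i'':Fin N):ℕ) + 1 = (i:ℕ)-1 := by omega
          have h1 : g i' ≤ 3^((i:ℕ)) := by
            have gv : g i' = stmt13aux_gfun N tt t ((i:ℕ)) := by simp only [hg]; rw [e3]
            rw [gv]; exact stmt13aux_gfun_le N tt t _
          have h2 : g i'' ≤ 3^((i:ℕ)-1) := by
            have gv : g i'' = stmt13aux_gfun N tt t ((i:ℕ)-1) := by simp only [hg]; rw [e4]
            rw [gv]; exact stmt13aux_gfun_le N tt t _
          have h3 : 3^((i:ℕ)) + 3^((i:ℕ)-1) < 3^((i:ℕ)+1) := by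
            have e : (i:ℕ)-1+1 = (i:ℕ) := by omega
            have h4 : (3:ℕ)^((i:ℕ)-1) ≤ 3^((i:ℕ)) := Nat.pow_le_pow_right (by norm_num) (by omega)
            have h5 : (3:ℕ)^((i:ℕ)+1) = 3 * 3^((i:ℕ)) := by ring
            have h6 : (1:ℕ) ≤ 3^((i:ℕ)) := Nat.one_le_pow _ _ (by norm_num)
            omega
          omega
        obtain ⟨z, hz, hzc⟩ := ih (∑ k, x' k * g k) (by omega) x' hx'V le_rfl
        exact ⟨z, hz, hzc.trans hcost⟩

private lemma stmt13aux_basis_mem (N n : ℕ) (h1n : 1 ≤ n) (hnN : n ≤ N) :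
    (fun k : Fin N => if (k:ℕ) = n - 1 then 1 else 0) ∈ Cset N n := by
  have hlt : n - 1 < N := by omega
  set e : Fin N → ℕ := fun k => if (k:ℕ) = n - 1 then 1 else 0 with he
  have hcond : ∀ k : Fin N, ((k:ℕ) = n - 1) ↔ (k = ⟨n-1, hlt⟩) := by
    intro k; constructor
    · intro h; exact Fin.ext h
    · intro h; rw [h]
  refine ⟨⟨?_, ?_⟩, ?_⟩
  · have : ∑ k : Fin N, e k * Nat.fib ((k:ℕ)+1)
        = ∑ k : Fin N, (if k = ⟨n-1, hlt⟩ then Nat.fib ((k:ℕ)+1) else 0) := by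
      apply Finset.sum_congr rfl
      intro k _
      simp only [he, hcond k]
      split_ifs <;> simp
    rw [this, Finset.sum_ite_eq']
    simp only [Finset.mem_univ, if_pos]
    congr 1
    omega
  · have : ∑ k : Fin N, e k * Nat.fib (k:ℕ)
        = ∑ k : Fin N, (if k = ⟨n-1, hlt⟩ then Nat.fib (k:ℕ) else 0) := by
      apply Finset.sum_congr rfl
      intro k _
      simp only [he, hcond k]
      split_ifs <;> simp
    rw [this, Finset.sum_ite_eq']
    simp
  · intro j hj hprod i hij
    exfalso
    apply hprod
    have hv : ((⟨(j:ℕ)+1, hj⟩ : Fin N) : ℕ) = (j:ℕ)+1 := rfl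
    simp only [he, hv]
    rcases eq_or_ne ((j:ℕ)+1) (n-1) with h | h
    · rw [if_neg (show ¬((j:ℕ) = n-1) by omega)]; simp
    · rw [if_neg h]; simp

private lemma stmt13aux_vset_finite (N n : ℕ) : (Vset N n).Finite := by
  apply Set.Finite.subset (Set.Finite.pi (fun _ : Fin N => Set.finite_Iic (Nat.fib n)))
  intro x hx
  intro k _
  simp only [Set.mem_Iic]
  have h1 : x k * Nat.fib ((k:ℕ)+1) ≤ ∑ i : Fin N, x i * Nat.fib ((i:ℕ)+1) :=
    Finset.single_le_sum (f := fun i : Fin N => x i * Nat.fib ((i:ℕ)+1))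
      (fun i _ => Nat.zero_le _) (Finset.mem_univ k)
  have h2 : 1 ≤ Nat.fib ((k:ℕ)+1) := Nat.fib_pos.2 (by omega)
  calc x k ≤ x k * Nat.fib ((k:ℕ)+1) := Nat.le_mul_of_pos_right _ h2
    _ ≤ Nat.fib n := by rw [hx.1] at h1; exact h1

end Stmt13Aux

/-- Theorem `MainProgress` (i): for `N ≥ 3`, a pair of primes `(p,q)`
compatible with `N`, and `1 ≤ n ≤ N`, `min{f_x(t) : x ∈ C_n} = min{f_x(t) : x ∈ V_n}` for
all `t > 0` (both minima exist and agree). -/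
theorem stmt13 (N p q : ℕ) (hN : 3 ≤ N) (hp : p.Prime) (hq : q.Prime) (hW : CondW N p q)
    (tt : ℕ → ℝ)
    (htt : ∀ m : ℕ, 3 ≤ m → m ≤ N + 1 →
      (0 < tt m ∧ peq p q m (tt m)) ∧ ∀ t' : ℝ, 0 < t' → peq p q m t' → t' = tt m)
    (hdec : ∀ m : ℕ, 3 ≤ m → m ≤ N → tt (m + 1) < tt m)
    (n : ℕ) (h1n : 1 ≤ n) (hnN : n ≤ N) :
    ∀ t : ℝ, 0 < t → ∃ m : ℝ,
      IsLeast ((fun x => fmeas N p q x t) '' Cset N n) m ∧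
      IsLeast ((fun x => fmeas N p q x t) '' Vset N n) m := by
  intro t ht
  obtain ⟨hLQ, hQ2L⟩ := stmt13aux_logs_lt hN hp hq hW
  have hL : (0:ℝ) < Real.log p := Real.log_pos (by exact_mod_cast hp.one_lt)
  have hsub : ∀ m, 3 ≤ m → m ≤ N+1 → t ≤ tt m →
      mmax p q m ^ t ≤ mmax p q (m-1) ^ t + mmax p q (m-2) ^ t := by
    intro m h3 hN1 hle
    obtain ⟨⟨hτ, hpeq⟩, _⟩ := htt m h3 hN1
    unfold peq at hpeq
    have hC : 0 < mmax p q (m-2) := stmt13aux_mmax_pos hL (by omega)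
    have hCB : mmax p q (m-2) ≤ mmax p q (m-1) := by
      have := stmt13aux_mmax_mono hL hLQ hQ2L (k := m-2) (by omega)
      have e : m-2+1 = m-1 := by omega
      rw [e] at this; exact this.le
    have hBA : mmax p q (m-1) < mmax p q m := by
      have := stmt13aux_mmax_mono hL hLQ hQ2L (k := m-1) (by omega)
      have e : m-1+1 = m := by omega
      rw [e] at this; exact this
    exact (stmt13aux_sign hC hCB hBA hpeq).1 hle
  have hsup : ∀ m, 3 ≤ m → m ≤ N+1 → tt m < t →
      mmax p q (m-1) ^ t + mmax p q (m-2) ^ t ≤ mmax p q m ^ t := by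
    intro m h3 hN1 hlt
    obtain ⟨⟨hτ, hpeq⟩, _⟩ := htt m h3 hN1
    unfold peq at hpeq
    have hC : 0 < mmax p q (m-2) := stmt13aux_mmax_pos hL (by omega)
    have hCB : mmax p q (m-2) ≤ mmax p q (m-1) := by
      have := stmt13aux_mmax_mono hL hLQ hQ2L (k := m-2) (by omega)
      have e : m-2+1 = m-1 := by omega
      rw [e] at this; exact this.le
    have hBA : mmax p q (m-1) < mmax p q m := by
      have := stmt13aux_mmax_mono hL hLQ hQ2L (k := m-1) (by omega)
      have e : m-1+1 = m := by omega
      rw [e] at this; exact this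
    exact ((stmt13aux_sign hC hCB hBA hpeq).2 hlt).le
  have hanti : ∀ a b : ℕ, 3 ≤ a → a ≤ b → b ≤ N+1 → tt b ≤ tt a := by
    intro a b ha hab hb
    induction b with
    | zero => omega
    | succ b ihb =>
      rcases Nat.eq_or_lt_of_le hab with h | h
      · rw [h]
      · have h1 : a ≤ b := by omega
        have h2 : tt (b+1) < tt b := hdec b (by omega) (by omega)
        exact le_trans h2.le (ihb h1 (by omega))
  have key := stmt13aux_reduce N p q n tt t hsub hsup hanti
  have hCfin : (Cset N n).Finite :=
    (stmt13aux_vset_finite N n).subset (fun z hz => hz.1)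
  have hCne : (Cset N n).Nonempty := ⟨_, stmt13aux_basis_mem N n h1n hnN⟩
  obtain ⟨z0, hz0, hmin⟩ :=
    Set.exists_min_image (Cset N n) (fun x => fmeas N p q x t) hCfin hCne
  refine ⟨fmeas N p q z0 t, ⟨⟨z0, hz0, rfl⟩, ?_⟩, ⟨⟨z0, hz0.1, rfl⟩, ?_⟩⟩
  · rintro v ⟨y, hy, rfl⟩
    exact hmin y hy
  · rintro v ⟨y, hy, rfl⟩
    obtain ⟨z, hzC, hle⟩ := key y hy
    refine le_trans (hmin z hzC) ?_
    unfold fmeas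
    apply Real.rpow_le_rpow ?_ hle (by positivity)
    apply Finset.sum_nonneg
    intro k _
    apply mul_nonneg (Nat.cast_nonneg _)
    apply Real.rpow_nonneg
    exact le_trans (mul_nonneg (Nat.cast_nonneg _) hL.le) (le_max_left _ _)
end
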